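/- For every boolean function f, the number of relevant variables satisfies n(f) ≤ I[f]·2^{deg(f)−1}, where I[f] is the total influence. -/

import Mathlib

open Finset
open scoped Classical

namespace BF

noncomputable section

/-- flip the bits of `x` belonging to `B`. -/
def flipS {n : ℕ} (x : Fin n → Bool) (B : Finset (Fin n)) : Fin n → Bool :=
  fun i => if i ∈ B then !(x i) else x i

/-- flip the `i`-th bit of `x`. -/
def flip1 {n : ℕ} (x : Fin n → Bool) (i : Fin n) : Fin n → Bool :=
  fun j => if j = i then !(x j) else x j

/-- real value of a boolean. -/
def bval (b : Bool) : ℝ := if b then 1 else 0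

/-- coefficient of the monomial `∏_{i ∈ S} x_i` in the unique multilinear
real polynomial expansion of `f` (Möbius inversion over the subcube lattice). -/
def coeffS {n : ℕ} (f : (Fin n → Bool) → ℝ) (S : Finset (Fin n)) : ℝ :=
  ∑ T ∈ S.powerset, (-1 : ℝ) ^ (S.card - T.card) * f (fun i => decide (i ∈ T))

/-- degree of the multilinear expansion of a real-valued function on the cube. -/
def degF {n : ℕ} (f : (Fin n → Bool) → ℝ) : ℕ :=
  (Finset.univ.filter fun S : Finset (Fin n) => coeffS f S ≠ 0).sup Finset.card

/-- degree of a boolean function. -/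
def degB {n : ℕ} (f : (Fin n → Bool) → Bool) : ℕ := degF (fun x => bval (f x))

/-- block sensitivity of `f` at `x`. -/
def bsAt {n : ℕ} (f : (Fin n → Bool) → Bool) (x : Fin n → Bool) : ℕ :=
  (Finset.univ.filter fun 𝓑 : Finset (Finset (Fin n)) =>
      (∀ B ∈ 𝓑, f (flipS x B) ≠ f x) ∧
      ∀ A ∈ 𝓑, ∀ B ∈ 𝓑, A ≠ B → Disjoint A B).sup Finset.card

/-- block sensitivity of `f`. -/
def bs {n : ℕ} (f : (Fin n → Bool) → Bool) : ℕ := Finset.univ.sup (bsAt f)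

/-- sensitivity of `f` at `x`. -/
def sx {n : ℕ} (f : (Fin n → Bool) → Bool) (x : Fin n → Bool) : ℕ :=
  (Finset.univ.filter fun i => f (flip1 x i) ≠ f x).card

/-- (maximum) sensitivity of `f`. -/
def sens {n : ℕ} (f : (Fin n → Bool) → Bool) : ℕ := Finset.univ.sup (sx f)

/-- coordinate `i` is relevant for `f`. -/
def Rel {n : ℕ} (i : Fin n) (f : (Fin n → Bool) → Bool) : Prop :=
  ∃ x, f (flip1 x i) ≠ f x

/-- the set of relevant coordinates of `f`. -/
def relSet {n : ℕ} (f : (Fin n → Bool) → Bool) : Finset (Fin n) :=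
  Finset.univ.filter fun i => Rel i f

/-- the number of relevant variables `n(f)`. -/
def nrel {n : ℕ} (f : (Fin n → Bool) → Bool) : ℕ := (relSet f).card

/-- influence of coordinate `i` on `f` (uniform distribution). -/
def infl {n : ℕ} (f : (Fin n → Bool) → Bool) (i : Fin n) : ℝ :=
  ((Finset.univ.filter fun x : Fin n → Bool => f x ≠ f (flip1 x i)).card : ℝ) / 2 ^ n

/-- total influence `I[f]`. -/
def totalInf {n : ℕ} (f : (Fin n → Bool) → Bool) : ℝ := ∑ i, infl f i

/-- restriction of `f` fixing the coordinates in `H` according to `α`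
(viewed as a function on the full cube not depending on the coordinates in `H`). -/
def restrict {n : ℕ} (f : (Fin n → Bool) → Bool) (H : Finset (Fin n))
    (α : Fin n → Bool) : (Fin n → Bool) → Bool :=
  fun x => f (fun i => if i ∈ H then α i else x i)

/-- certificate complexity of `f` at `x`. -/
def certAt {n : ℕ} (f : (Fin n → Bool) → Bool) (x : Fin n → Bool) : ℕ :=
  sInf {k | ∃ S : Finset (Fin n), S.card = k ∧
    ∀ y, (∀ i ∈ S, y i = x i) → f y = f x}

/-- certificate complexity `C(f)`. -/
def certC {n : ℕ} (f : (Fin n → Bool) → Bool) : ℕ := Finset.univ.sup (certAt f)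

/-- `f` is in standard form: `f(0) = 0` and `f(e_i) = 1` for every basis vector. -/
def stdForm {b : ℕ} (f : (Fin b → Bool) → Bool) : Prop :=
  f (fun _ => false) = false ∧ ∀ i : Fin b, f (fun j => decide (j = i)) = true

end

end BF

namespace BF

-- ==================== auxiliary development ====================

variable {n : ℕ}

/-- merge: on `S` use indicator of `W`, off `S` use `z`. -/
noncomputable def mrg (S : Finset (Fin n)) (z : Fin n → Bool) (W : Finset (Fin n)) :
    Fin n → Bool := fun j => if j ∈ S then decide (j ∈ W) else z j

/-- alternating sum of `G` over the subcube on `S` with outside fixed to `z`. -/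
noncomputable def altS (G : (Fin n → Bool) → ℝ) (S : Finset (Fin n)) (z : Fin n → Bool) : ℝ :=
  ∑ W ∈ S.powerset, (-1 : ℝ) ^ (S.card - W.card) * G (mrg S z W)

lemma alt_rec (G : (Fin n → Bool) → ℝ) (S : Finset (Fin n)) (j : Fin n) (hj : j ∉ S)
    (z : Fin n → Bool) :
    altS G S (Function.update z j true) =
      altS G S (Function.update z j false) + altS G (insert j S) z := by
  classical
  have h1 : altS G (insert j S) z
      = ∑ W ∈ S.powerset, (-1:ℝ) ^ ((insert j S).card - W.card) * G (mrg (insert j S) z W)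
      + ∑ W ∈ S.powerset, (-1:ℝ) ^ ((insert j S).card - (insert j W).card) *
          G (mrg (insert j S) z (insert j W)) := by
    unfold altS
    exact Finset.sum_powerset_insert hj _
  rw [h1, altS, altS, ← Finset.sum_add_distrib, ← Finset.sum_add_distrib]
  apply Finset.sum_congr rfl
  intro W hW
  have hWS : W ⊆ S := Finset.mem_powerset.mp hW
  have hjW : j ∉ W := fun h => hj (hWS h)
  have hcS : (insert j S).card = S.card + 1 := Finset.card_insert_of_notMem hj
  have hcW : (insert j W).card = W.card + 1 := Finset.card_insert_of_notMem hjW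
  have hle : W.card ≤ S.card := Finset.card_le_card hWS
  have e1 : mrg (insert j S) z W = mrg S (Function.update z j false) W := by
    funext t
    by_cases ht : t = j
    · subst ht; simp [mrg, hj, hjW, Function.update]
    · by_cases hts : t ∈ S <;> simp [mrg, hts, ht, Function.update, Finset.mem_insert]
  have e2 : mrg (insert j S) z (insert j W) = mrg S (Function.update z j true) W := by
    funext t
    by_cases ht : t = j
    · subst ht; simp [mrg, hj, Function.update]
    · by_cases hts : t ∈ S <;> simp [mrg, hts, ht, Function.update, Finset.mem_insert]
  rw [e1, e2, hcS, hcW]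
  have e3 : S.card + 1 - W.card = (S.card - W.card) + 1 := by omega
  have e4 : S.card + 1 - (W.card + 1) = S.card - W.card := by omega
  rw [e3, e4, pow_succ]
  ring

lemma alt_eq_coeff (G : (Fin n → Bool) → ℝ) (k : ℕ) :
    ∀ (S : Finset (Fin n)) (z : Fin n → Bool),
      (∀ T, S ⊂ T → coeffS G T = 0) →
      ((Finset.univ.filter fun i => z i = true) \ S).card ≤ k →
      altS G S z = coeffS G S := by
  induction k with
  | zero =>
    intro S z h hk
    have hempty : (Finset.univ.filter fun i => z i = true) \ S = ∅ :=
      Finset.card_eq_zero.mp (Nat.le_zero.mp hk)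
    have hz : ∀ j, j ∉ S → z j = false := by
      intro j hjS
      cases hzj : z j with
      | false => rfl
      | true =>
        exfalso
        have hmem : j ∈ (Finset.univ.filter fun i => z i = true) \ S := by
          simp [Finset.mem_sdiff, Finset.mem_filter, hjS, hzj]
        rw [hempty] at hmem
        simp at hmem
    unfold altS coeffS
    apply Finset.sum_congr rfl
    intro W hW
    congr 2
    funext t
    by_cases hts : t ∈ S
    · simp [mrg, hts]
    · have htW : t ∉ W := fun hh => hts (Finset.mem_powerset.mp hW hh)
      simp [mrg, hts, hz t hts, htW]
  | succ k ih =>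
    intro S z h hk
    by_cases hemp : ((Finset.univ.filter fun i => z i = true) \ S) = ∅
    · exact ih S z h (by rw [hemp]; simp)
    · obtain ⟨j, hj⟩ := Finset.nonempty_iff_ne_empty.mpr hemp
      have hjS : j ∉ S := (Finset.mem_sdiff.mp hj).2
      have hjz : z j = true := (Finset.mem_filter.mp (Finset.mem_sdiff.mp hj).1).2
      set z0 := Function.update z j false with hz0
      have hzz : z = Function.update z0 j true := by
        funext t
        by_cases ht : t = j
        · subst ht; simp [z0, Function.update, hjz]
        · simp [z0, Function.update, ht]
      have key := alt_rec G S j hjS z0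
      have hz00 : Function.update z0 j false = z0 := by
        funext t
        by_cases ht : t = j <;> simp [z0, Function.update, ht]
      rw [← hzz, hz00] at key
      have hsupp : (Finset.univ.filter fun i => z0 i = true)
          = (Finset.univ.filter fun i => z i = true).erase j := by
        ext t
        by_cases ht : t = j <;> simp [z0, Function.update, ht]
      have hcard0 : ((Finset.univ.filter fun i => z0 i = true) \ S).card ≤ k := by
        rw [hsupp]
        have he : (Finset.univ.filter fun i => z i = true).erase j \ S
            = ((Finset.univ.filter fun i => z i = true) \ S).erase j := by
          ext t
          simp only [Finset.mem_sdiff, Finset.mem_erase]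
          tauto
        rw [he]
        have hce := Finset.card_erase_of_mem hj
        omega
      have hcard1 : ((Finset.univ.filter fun i => z0 i = true) \ insert j S).card ≤ k := by
        calc ((Finset.univ.filter fun i => z0 i = true) \ insert j S).card
            ≤ ((Finset.univ.filter fun i => z0 i = true) \ S).card :=
              Finset.card_le_card (Finset.sdiff_subset_sdiff (le_refl _)
                (Finset.subset_insert _ _))
          _ ≤ k := hcard0
      have h1 : altS G S z0 = coeffS G S := ih S z0 h hcard0
      have h2 : altS G (insert j S) z0 = coeffS G (insert j S) :=
        ih (insert j S) z0
          (fun T hT => h T (Finset.ssubset_of_ssubset_of_subset (Finset.ssubset_insert hjS) hT.subset)) hcard1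
      rw [key, h1, h2, h _ (Finset.ssubset_insert hjS), add_zero]

lemma exists_flip (f : (Fin n → Bool) → Bool) (i : Fin n) (S : Finset (Fin n))
    (hiS : i ∈ S) (hc : coeffS (fun x => bval (f x)) S ≠ 0)
    (hmax : ∀ T, S ⊂ T → coeffS (fun x => bval (f x)) T = 0) (z : Fin n → Bool) :
    ∃ y, (∀ j, j ∉ S → y j = z j) ∧ y i = false ∧ f (flip1 y i) ≠ f y := by
  classical
  set F : (Fin n → Bool) → ℝ := fun x => bval (f x) with hF
  have halt : altS F S z = coeffS F S := alt_eq_coeff F _ S z hmax (le_refl _)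
  by_contra hcon
  push_neg at hcon
  have hiE : i ∉ S.erase i := fun h => (Finset.mem_erase.mp h).1 rfl
  have hins : insert i (S.erase i) = S := Finset.insert_erase hiS
  have hzero : altS F S z = 0 := by
    unfold altS
    rw [← hins, Finset.sum_powerset_insert hiE, ← Finset.sum_add_distrib]
    apply Finset.sum_eq_zero
    intro W hW
    rw [hins]
    have hWE : W ⊆ S.erase i := Finset.mem_powerset.mp hW
    have hiW : i ∉ W := fun hh => hiE (hWE hh)
    have hcW : (insert i W).card = W.card + 1 := Finset.card_insert_of_notMem hiW
    have hWS : W ⊆ S := hWE.trans (Finset.erase_subset _ _)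
    have hlt : W.card < S.card :=
      Finset.card_lt_card (Finset.ssubset_of_subset_of_ssubset hWE
        (Finset.erase_ssubset hiS))
    have hyi : mrg S z W i = false := by simp [mrg, hiS, hiW]
    have hagree : ∀ j, j ∉ S → mrg S z W j = z j := by
      intro j hj; simp [mrg, hj]
    have hfeq : f (flip1 (mrg S z W) i) = f (mrg S z W) := hcon _ hagree hyi
    have hy : mrg S z (insert i W) = flip1 (mrg S z W) i := by
      funext t
      by_cases ht : t = i
      · subst ht; simp [mrg, flip1, hiS, hiW]
      · by_cases hts : t ∈ S <;> simp [mrg, flip1, ht, hts, Finset.mem_insert]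
    have hFeq : F (mrg S z (insert i W)) = F (mrg S z W) := by
      rw [hy, hF]; simp only [hfeq]
    rw [hFeq, hcW]
    have e1 : S.card - W.card = (S.card - (W.card + 1)) + 1 := by omega
    rw [e1, pow_succ]
    ring
  rw [hzero] at halt
  exact hc halt.symm

lemma count_bound (f : (Fin n → Bool) → Bool) (i : Fin n) (S : Finset (Fin n))
    (hiS : i ∈ S) (hc : coeffS (fun x => bval (f x)) S ≠ 0)
    (hmax : ∀ T, S ⊂ T → coeffS (fun x => bval (f x)) T = 0) :
    2 ^ (n + 1 - S.card) ≤
      (Finset.univ.filter fun x : Fin n → Bool => f x ≠ f (flip1 x i)).card := by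
  classical
  have hch : ∀ z : {j : Fin n // j ∉ S} → Bool, ∃ y : Fin n → Bool,
      (∀ j (hj : j ∉ S), y j = z ⟨j, hj⟩) ∧ y i = false ∧ f (flip1 y i) ≠ f y := by
    intro z
    obtain ⟨y, h1, h2, h3⟩ := exists_flip f i S hiS hc hmax
      (fun j => if hj : j ∉ S then z ⟨j, hj⟩ else false)
    exact ⟨y, fun j hj => by rw [h1 j hj]; simp [hj], h2, h3⟩
  choose Y hY1 hY2 hY3 using hch
  set Φ : ({j : Fin n // j ∉ S} → Bool) × Bool → (Fin n → Bool) :=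
    fun p => if p.2 then flip1 (Y p.1) i else Y p.1 with hΦ
  have hmapsto : ∀ p ∈ (Finset.univ : Finset (({j : Fin n // j ∉ S} → Bool) × Bool)),
      Φ p ∈ Finset.univ.filter fun x : Fin n → Bool => f x ≠ f (flip1 x i) := by
    intro p _
    simp only [Finset.mem_filter, Finset.mem_univ, true_and, hΦ]
    by_cases hb : p.2
    · simp only [hb, if_true]
      have hff : flip1 (flip1 (Y p.1) i) i = Y p.1 := by
        funext t
        by_cases ht : t = i <;> simp [flip1, ht]
      rw [hff]
      exact hY3 p.1
    · simp only [hb, if_false]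
      exact (hY3 p.1).symm
  have hvali : ∀ w : ({j : Fin n // j ∉ S} → Bool) × Bool, (Φ w) i = w.2 := by
    intro w
    by_cases hb : w.2
    · simp [hΦ, hb, flip1, hY2]
    · simp only [Bool.not_eq_true] at hb
      simp [hΦ, hb, hY2]
  have hvalo : ∀ (w : ({j : Fin n // j ∉ S} → Bool) × Bool) (j) (hj : j ∉ S),
      (Φ w) j = w.1 ⟨j, hj⟩ := by
    intro w j hj
    have hji : j ≠ i := fun hh => hj (hh ▸ hiS)
    by_cases hb : w.2
    · simp [hΦ, hb, flip1, hji, hY1 w.1 j hj]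
    · simp only [Bool.not_eq_true] at hb
      simp [hΦ, hb, hY1 w.1 j hj]
  have hinj : Set.InjOn Φ (Finset.univ : Finset (({j : Fin n // j ∉ S} → Bool) × Bool)) := by
    intro p _ q _ hpq
    have h2 : p.2 = q.2 := by rw [← hvali p, ← hvali q, hpq]
    have h1 : p.1 = q.1 := by
      funext t
      obtain ⟨j, hj⟩ := t
      rw [← hvalo p j hj, ← hvalo q j hj, hpq]
    exact Prod.ext h1 h2
  have hcard := Finset.card_le_card_of_injOn Φ hmapsto hinj
  have hc1 : (Finset.univ : Finset (({j : Fin n // j ∉ S} → Bool) × Bool)).card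
      = 2 ^ (n - S.card) * 2 := by
    rw [Finset.card_univ, Fintype.card_prod, Fintype.card_fun, Fintype.card_bool]
    congr 2
    rw [Fintype.card_subtype]
    have hfc : Finset.univ.filter (fun j : Fin n => j ∉ S) = Sᶜ := by
      ext t; simp
    rw [hfc, Finset.card_compl, Fintype.card_fin]
  have hSn : S.card ≤ n := by
    have := Finset.card_le_univ S
    simpa using this
  calc 2 ^ (n + 1 - S.card) = 2 ^ (n - S.card) * 2 := by
        rw [← pow_succ]
        congr 1
        omega
    _ ≤ _ := by rw [← hc1]; exact hcard

lemma rel_exists_coeff (f : (Fin n → Bool) → Bool) (i : Fin n) (h : Rel i f) :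
    ∃ S, i ∈ S ∧ coeffS (fun x => bval (f x)) S ≠ 0 := by
  classical
  by_contra hcon
  push_neg at hcon
  obtain ⟨x, hx⟩ := h
  apply hx
  set F : (Fin n → Bool) → ℝ := fun x => bval (f x) with hF
  have halt : altS F {i} x = coeffS F {i} :=
    alt_eq_coeff F _ {i} x
      (fun T hT => hcon T (hT.subset (Finset.mem_singleton_self i))) (le_refl _)
  rw [hcon {i} (Finset.mem_singleton_self i)] at halt
  have hps : ({i} : Finset (Fin n)).powerset = {∅, {i}} := by
    ext T
    simp [Finset.subset_singleton_iff]
  have hne : (∅ : Finset (Fin n)) ∉ ({{i}} : Finset (Finset (Fin n))) := by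
    simp
  have hexp : altS F {i} x
      = (-1 : ℝ) * F (mrg {i} x ∅) + F (mrg {i} x {i}) := by
    unfold altS
    rw [hps, Finset.sum_insert hne, Finset.sum_singleton]
    simp
  rw [hexp] at halt
  have hFeq : F (mrg {i} x {i}) = F (mrg {i} x ∅) := by linarith
  have hfeq : f (mrg {i} x {i}) = f (mrg {i} x ∅) := by
    by_contra hne'
    rcases Bool.eq_false_or_eq_true (f (mrg {i} x {i})) with h1 | h1 <;>
      rcases Bool.eq_false_or_eq_true (f (mrg {i} x ∅)) with h2 | h2 <;>
        simp [hF, bval, h1, h2] at hFeq hne' ⊢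
  cases hxi : x i with
  | false =>
    have e0 : mrg {i} x ∅ = x := by
      funext t
      by_cases ht : t = i
      · subst ht; simp [mrg, hxi]
      · simp [mrg, ht]
    have e1 : mrg {i} x {i} = flip1 x i := by
      funext t
      by_cases ht : t = i
      · subst ht; simp [mrg, flip1, hxi]
      · simp [mrg, flip1, ht]
    rw [e0, e1] at hfeq
    exact hfeq
  | true =>
    have e0 : mrg {i} x {i} = x := by
      funext t
      by_cases ht : t = i
      · subst ht; simp [mrg, hxi]
      · simp [mrg, ht]
    have e1 : mrg {i} x ∅ = flip1 x i := by
      funext t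
      by_cases ht : t = i
      · subst ht; simp [mrg, flip1, hxi]
      · simp [mrg, flip1, ht]
    rw [e0, e1] at hfeq
    exact hfeq.symm

end BF

open BF

/-- `n(f) ≤ I[f]·2^{deg(f)−1}`. -/
theorem stmt14 {n : ℕ} (f : (Fin n → Bool) → Bool) :
    (nrel f : ℝ) ≤ totalInf f * (2 : ℝ) ^ ((degB f : ℤ) - 1) := by
  classical
  have hinfl0 : ∀ i, 0 ≤ infl f i := by
    intro i
    unfold infl
    positivity
  have key : ∀ i ∈ relSet f, (2 : ℝ) ^ ((1 : ℤ) - degB f) ≤ infl f i := by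
    intro i hi
    have hrel : Rel i f := (Finset.mem_filter.mp hi).2
    obtain ⟨S0, hS0i, hS0c⟩ := rel_exists_coeff f i hrel
    set 𝒮 := Finset.univ.filter
      (fun S : Finset (Fin n) => i ∈ S ∧ coeffS (fun x => bval (f x)) S ≠ 0) with h𝒮
    have hne : 𝒮.Nonempty := ⟨S0, by simp [h𝒮, hS0i, hS0c]⟩
    obtain ⟨S, hS, hSmax⟩ := Finset.exists_max_image 𝒮 Finset.card hne
    have hiS : i ∈ S := (Finset.mem_filter.mp hS).2.1
    have hc : coeffS (fun x => bval (f x)) S ≠ 0 := (Finset.mem_filter.mp hS).2.2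
    have hmax : ∀ T, S ⊂ T → coeffS (fun x => bval (f x)) T = 0 := by
      intro T hT
      by_contra hTc
      have hTm : T ∈ 𝒮 := by simp [h𝒮, hT.subset hiS, hTc]
      exact absurd (Finset.card_lt_card hT) (not_lt.mpr (hSmax T hTm))
    have hcount := count_bound f i S hiS hc hmax
    have hSd : S.card ≤ degB f := by
      unfold degB degF
      exact Finset.le_sup (by simp [hc])
    have hSn : S.card ≤ n := by
      have := Finset.card_le_univ S
      simpa using this
    unfold infl
    have h2n : (0:ℝ) < 2 ^ n := by positivity
    rw [le_div_iff₀ h2n]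
    have hSdZ : (S.card : ℤ) ≤ (degB f : ℤ) := by exact_mod_cast hSd
    calc (2:ℝ) ^ ((1 : ℤ) - degB f) * 2 ^ n
        = 2 ^ ((1 : ℤ) - degB f + n) := by
          rw [← zpow_natCast (2:ℝ) n, ← zpow_add₀ (two_ne_zero)]
      _ ≤ 2 ^ ((n : ℤ) + 1 - S.card) := by
          apply zpow_le_zpow_right₀ one_le_two
          omega
      _ = ((2 ^ (n + 1 - S.card) : ℕ) : ℝ) := by
          have hcst : ((n + 1 - S.card : ℕ) : ℤ) = (n : ℤ) + 1 - S.card := by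
            omega
          rw [← hcst]
          norm_cast
      _ ≤ _ := by exact_mod_cast hcount
  have hsum : (nrel f : ℝ) * 2 ^ ((1 : ℤ) - degB f) ≤ totalInf f := by
    unfold totalInf
    calc (nrel f : ℝ) * 2 ^ ((1 : ℤ) - degB f)
        = ∑ _i ∈ relSet f, (2:ℝ) ^ ((1 : ℤ) - degB f) := by
          rw [Finset.sum_const, nsmul_eq_mul]
          rfl
      _ ≤ ∑ i ∈ relSet f, infl f i := Finset.sum_le_sum key
      _ ≤ ∑ i, infl f i :=
          Finset.sum_le_sum_of_subset_of_nonneg (Finset.subset_univ _)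
            (fun i _ _ => hinfl0 i)
  have hz : ((1 : ℤ) - degB f) + ((degB f : ℤ) - 1) = 0 := by ring
  calc (nrel f : ℝ)
      = (nrel f * 2 ^ ((1 : ℤ) - degB f)) * 2 ^ ((degB f : ℤ) - 1) := by
        rw [mul_assoc, ← zpow_add₀ (two_ne_zero : (2:ℝ) ≠ 0), hz, zpow_zero, mul_one]
    _ ≤ totalInf f * 2 ^ ((degB f : ℤ) - 1) :=
        mul_le_mul_of_nonneg_right hsum
          (le_of_lt (zpow_pos (by norm_num) _))
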